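/- For every partition λ = (λ_1,…,λ_l), the polynomial S_λ = det(H_{λ_i+j-i}) is the coefficient of t_1^{λ_1}⋯t_l^{λ_l} in ∏_{i<j}(1 - t_j/t_i) · ∏_{r=1}^l ∏_{i≥1} (1-t_r^i)^{-X_i}. -/

import Mathlib

open MvPolynomial

/-- The polynomial multichoose `C(p + j - 1, j) = p(p+1)⋯(p+j-1)/j!`. -/
noncomputable def polyMultichoose (p : MvPolynomial ℕ ℚ) (j : ℕ) : MvPolynomial ℕ ℚ :=
  (j.factorial : ℚ)⁻¹ • ∏ k ∈ Finset.range j, (p + (k : MvPolynomial ℕ ℚ))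

/-- The power series `(1 - t^i)^{-Xᵢ} = ∑_j multichoose(Xᵢ, j) t^{ij}` over `ℚ[X₁,X₂,…]`. -/
noncomputable def Hfactor (i : ℕ) : PowerSeries (MvPolynomial ℕ ℚ) :=
  PowerSeries.mk fun m => if i ∣ m then polyMultichoose (X i) (m / i) else 0

/-- `H_d`, defined by `∑_d H_d t^d = ∏_{i ≥ 1} (1 - t^i)^{-Xᵢ}`. -/
noncomputable def Hpoly (d : ℕ) : MvPolynomial ℕ ℚ :=
  PowerSeries.coeff d (∏ i ∈ Finset.Icc 1 d, Hfactor i)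

/-- `H` extended to integer indices by `H_k = 0` for `k < 0`. -/
noncomputable def Hz (k : ℤ) : MvPolynomial ℕ ℚ :=
  if 0 ≤ k then Hpoly k.toNat else 0

/-- The series `∑_d H_d t_r^d = ∏_{i ≥ 1}(1 - t_r^i)^{-Xᵢ}` in the variable `t_r`, viewed as
a multivariate power series in `t_1,…,t_l` over `ℚ[X₁,X₂,…]`. -/
noncomputable def Hser (l : ℕ) (r : Fin l) : MvPowerSeries (Fin l) (MvPolynomial ℕ ℚ) :=
  fun e => if e = Finsupp.single r (e r) then Hpoly (e r) else 0

lemma Hz_coe_sub (m n : ℕ) : Hz ((m : ℤ) - n) = if n ≤ m then Hpoly (m - n) else 0 := by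
  unfold Hz
  by_cases h : n ≤ m
  · rw [if_pos (by omega), if_pos h]
    congr 1; omega
  · rw [if_neg (by omega), if_neg h]

lemma coeff_Hser (l : ℕ) (k : Fin l) (m : Fin l →₀ ℕ) :
    MvPowerSeries.coeff m (Hser l k)
      = if m = Finsupp.single k (m k) then Hpoly (m k) else 0 := rfl

lemma coeff_factor (l : ℕ) (k : Fin l) (b : ℕ) (m : Fin l →₀ ℕ) :
    MvPowerSeries.coeff m (MvPowerSeries.X (R := MvPolynomial ℕ ℚ) k ^ b * Hser l k)
      = if m = Finsupp.single k (m k) then Hz ((m k : ℤ) - b) else 0 := by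
  rw [MvPowerSeries.X_pow_eq, MvPowerSeries.coeff_monomial_mul]
  by_cases hle : Finsupp.single k b ≤ m
  · have hbk : b ≤ m k := by
      have := hle k; simpa using this
    rw [if_pos hle, one_mul, coeff_Hser]
    have hsub : (m - Finsupp.single k b) k = m k - b := by
      simp [Finsupp.tsub_apply]
    rw [hsub]
    by_cases hm : m = Finsupp.single k (m k)
    · rw [if_pos, if_pos hm, Hz_coe_sub, if_pos hbk]
      rw [hm]
      ext j
      by_cases hj : j = k
      · subst hj; simp [Finsupp.tsub_apply]
      · simp [Finsupp.tsub_apply, Finsupp.single_apply, Ne.symm hj, hj]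
    · rw [if_neg, if_neg hm]
      intro hcon
      apply hm
      have : m = Finsupp.single k (m k - b) + Finsupp.single k b := by
        rw [← hcon]; exact (tsub_add_cancel_of_le hle).symm
      rw [this]
      ext j
      by_cases hj : j = k
      · subst hj; simp
      · simp [Finsupp.single_apply, Ne.symm hj, hj]
  · rw [if_neg hle]
    by_cases hm : m = Finsupp.single k (m k)
    · rw [if_pos hm, Hz_coe_sub, if_neg, ]
      intro hbk
      apply hle
      intro j
      by_cases hj : j = k
      · subst hj; simpa using hbk
      · simp [Finsupp.single_apply, Ne.symm hj, hj]
    · rw [if_neg hm]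

lemma coeff_prod_single (l : ℕ) (b : Fin l → ℕ) (e : Fin l →₀ ℕ) :
    MvPowerSeries.coeff e (∏ k : Fin l, (MvPowerSeries.X (R := MvPolynomial ℕ ℚ) k ^ b k * Hser l k))
      = ∏ k : Fin l, Hz ((e k : ℤ) - b k) := by
  classical
  rw [MvPowerSeries.coeff_prod]
  set L0 : Fin l →₀ (Fin l →₀ ℕ) :=
    Finsupp.equivFunOnFinite.symm (fun k => Finsupp.single k (e k)) with hL0
  have hL0app : ∀ k, L0 k = Finsupp.single k (e k) := fun k => rfl
  have hmem : L0 ∈ Finset.finsuppAntidiag Finset.univ e := by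
    rw [Finset.mem_finsuppAntidiag]
    refine ⟨?_, Finset.subset_univ _⟩
    ext j
    rw [Finset.sum_apply']
    simp [hL0app, Finsupp.single_apply]
  rw [Finset.sum_eq_single_of_mem L0 hmem]
  · refine Finset.prod_congr rfl fun k _ => ?_
    rw [hL0app, coeff_factor, if_pos] <;> simp
  · intro L hL hne
    by_contra hprod
    have hfac : ∀ k, MvPowerSeries.coeff (L k)
        (MvPowerSeries.X (R := MvPolynomial ℕ ℚ) k ^ b k * Hser l k) ≠ 0 := by
      intro k hk
      exact hprod (Finset.prod_eq_zero (Finset.mem_univ k) hk)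
    have hsingle : ∀ k, L k = Finsupp.single k (L k k) := by
      intro k
      have := hfac k
      rw [coeff_factor] at this
      by_contra hc
      rw [if_neg hc] at this
      exact this rfl
    apply hne
    rw [Finset.mem_finsuppAntidiag] at hL
    have hsum := hL.1
    have haux : ∀ s, (L s) s = e s := by
      intro s
      have hts : (∑ k, L k) s = e s := by rw [hsum]
      rw [Finset.sum_apply'] at hts
      have hj : ∀ k, (L k) s = if k = s then (L s) s else 0 := by
        intro k
        rw [hsingle k, Finsupp.single_apply]
        by_cases hks : k = s <;> simp [hks, ← hsingle]
      rw [Finset.sum_congr rfl (fun k _ => hj k), Finset.sum_ite_eq' Finset.univ s] at hts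
      simpa using hts
    ext j s
    rw [hsingle j, hL0app, haux j]

/-- The character polynomial `S_λ = det(H_{λᵢ+j-i})` of the Weyl module `W_λ` is the
coefficient of `t₁^{λ₁}⋯t_l^{λ_l}` in `∏_{i<j}(1 - t_j/t_i)·∏_{r=1}^l ∏_{i≥1}(1-t_r^i)^{-Xᵢ}`.
Clearing denominators (`∏_{i<j}(1-t_j/t_i) = ∏_{i<j}(t_i-t_j)/∏_i t_i^{l-i}`), this says that
`S_λ` is the coefficient of `∏_r t_r^{λ_r + l - r}` (1-indexed) in
`∏_{i<j}(t_i - t_j) · ∏_r ∑_d H_d t_r^d`. -/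
theorem Weyl_character_polynomial_generating_function (l : ℕ) (lam : Fin l → ℕ)
    (hpos : ∀ i, 0 < lam i) (hmono : ∀ i j : Fin l, i ≤ j → lam j ≤ lam i) :
    Matrix.det (Matrix.of fun i j : Fin l => Hz ((lam i : ℤ) + (j : ℤ) - (i : ℤ)))
      = MvPowerSeries.coeff
          (Finsupp.equivFunOnFinite.symm fun r : Fin l => lam r + (l - 1 - (r : ℕ)))
          ((∏ p ∈ Finset.univ.filter (fun p : Fin l × Fin l => p.1 < p.2),
              (MvPowerSeries.X p.1 - MvPowerSeries.X p.2)) *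
            ∏ r : Fin l, Hser l r) := by
  classical
  set e : Fin l →₀ ℕ :=
    Finsupp.equivFunOnFinite.symm fun r : Fin l => lam r + (l - 1 - (r : ℕ)) with he
  have heapp : ∀ r, e r = lam r + (l - 1 - (r : ℕ)) := fun r => rfl
  -- Step 1: the pair product is a Vandermonde determinant
  have hvdm : (∏ p ∈ Finset.univ.filter (fun p : Fin l × Fin l => p.1 < p.2),
      (MvPowerSeries.X (R := MvPolynomial ℕ ℚ) p.1 - MvPowerSeries.X p.2))
      = (Matrix.vandermonde fun i : Fin l =>
          (MvPowerSeries.X (R := MvPolynomial ℕ ℚ) i.rev)).det := by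
    rw [Matrix.det_vandermonde]
    have hdouble : ∀ (f : Fin l → Fin l → MvPowerSeries (Fin l) (MvPolynomial ℕ ℚ)),
        ∏ p ∈ Finset.univ.filter (fun p : Fin l × Fin l => p.1 < p.2), f p.1 p.2
          = ∏ i, ∏ j ∈ Finset.Ioi i, f i j := by
      intro f
      rw [Finset.prod_filter, Fintype.prod_prod_type]
      refine Finset.prod_congr rfl fun i _ => ?_
      rw [Finset.prod_ite, Finset.prod_const_one, mul_one]
      refine Finset.prod_congr ?_ fun _ _ => rfl
      ext j; simp
    rw [← hdouble fun i j => MvPowerSeries.X j.rev - MvPowerSeries.X i.rev]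
    refine Finset.prod_nbij' (fun p => (p.2.rev, p.1.rev)) (fun p => (p.2.rev, p.1.rev))
      ?_ ?_ ?_ ?_ ?_
    · intro p hp
      simp only [Finset.mem_filter, Finset.mem_univ, true_and] at hp ⊢
      exact Fin.rev_lt_rev.mpr hp
    · intro p hp
      simp only [Finset.mem_filter, Finset.mem_univ, true_and] at hp ⊢
      exact Fin.rev_lt_rev.mpr hp
    · intro p _; simp
    · intro p _; simp
    · intro p _; simp
  -- Step 2: LHS via Leibniz
  have hLHS : Matrix.det (Matrix.of fun i j : Fin l => Hz ((lam i : ℤ) + (j : ℤ) - (i : ℤ)))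
      = ∑ σ : Equiv.Perm (Fin l), Equiv.Perm.sign σ •
          ∏ k : Fin l, Hz ((lam k : ℤ) + ((σ⁻¹ k : Fin l) : ℤ) - (k : ℤ)) := by
    rw [Matrix.det_apply]
    refine Finset.sum_congr rfl fun σ _ => ?_
    congr 1
    rw [← Equiv.prod_comp σ⁻¹
      (fun i => (Matrix.of fun i j : Fin l => Hz ((lam i : ℤ) + (j : ℤ) - (i : ℤ))) (σ i) i)]
    refine Finset.prod_congr rfl fun k _ => ?_
    simp [Matrix.of_apply]
  -- Step 3: RHS via Leibniz and coefficient extraction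
  have hRHS : MvPowerSeries.coeff e
      ((∏ p ∈ Finset.univ.filter (fun p : Fin l × Fin l => p.1 < p.2),
          (MvPowerSeries.X p.1 - MvPowerSeries.X p.2)) * ∏ r : Fin l, Hser l r)
      = ∑ σ : Equiv.Perm (Fin l), Equiv.Perm.sign σ •
          ∏ k : Fin l, Hz ((e k : ℤ) - ((σ⁻¹ k.rev : Fin l) : ℕ)) := by
    rw [hvdm, Matrix.det_apply, Finset.sum_mul, map_sum]
    refine Finset.sum_congr rfl fun σ _ => ?_
    rw [smul_mul_assoc, Units.smul_def, Units.smul_def, map_zsmul]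
    congr 1
    have hprod : (∏ i : Fin l,
        Matrix.vandermonde (fun i : Fin l =>
          (MvPowerSeries.X (R := MvPolynomial ℕ ℚ) i.rev)) (σ i) i)
        = ∏ k : Fin l, MvPowerSeries.X (R := MvPolynomial ℕ ℚ) k ^ ((σ⁻¹ k.rev : Fin l) : ℕ) := by
      set π : Equiv.Perm (Fin l) := σ.trans Fin.revPerm with hπ
      have hsymm : ∀ k, π.symm k = σ⁻¹ k.rev := fun k => rfl
      have h2 := Equiv.prod_comp π
        (fun k => MvPowerSeries.X (R := MvPolynomial ℕ ℚ) k ^ ((π.symm k : Fin l) : ℕ))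
      simp only [Equiv.symm_apply_apply, hsymm] at h2
      rw [← h2]
      · refine Finset.prod_congr rfl fun i _ => ?_
        simp [Matrix.vandermonde_apply, hπ, Equiv.trans_apply]
    rw [hprod, ← Finset.prod_mul_distrib, coeff_prod_single]
  rw [hLHS, hRHS]
  -- Step 4: reindex the permutation sum by conjugation with the reversal
  refine Fintype.sum_bijective (fun σ => Fin.revPerm * σ * Fin.revPerm)
    (((Group.mulLeft_bijective Fin.revPerm).comp (Group.mulRight_bijective Fin.revPerm))) _ _
    fun σ => ?_
  have hsign : Equiv.Perm.sign (Fin.revPerm * σ * Fin.revPerm : Equiv.Perm (Fin l))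
      = Equiv.Perm.sign σ := by
    rw [Equiv.Perm.sign_mul, Equiv.Perm.sign_mul, mul_comm (Equiv.Perm.sign Fin.revPerm),
      mul_assoc, Int.units_mul_self, mul_one]
  rw [hsign]
  congr 1
  refine Finset.prod_congr rfl fun k _ => ?_
  have hinv : (Fin.revPerm * σ * Fin.revPerm : Equiv.Perm (Fin l))⁻¹ k.rev
      = (σ⁻¹ k).rev := by
    rw [Equiv.Perm.inv_eq_iff_eq]
    simp [Equiv.Perm.mul_apply]
  rw [hinv, heapp]
  congr 1
  have h1 : (k : ℕ) < l := k.isLt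
  have h2 : ((σ⁻¹ k : Fin l) : ℕ) < l := (σ⁻¹ k).isLt
  have h3 : (((σ⁻¹ k : Fin l).rev : Fin l) : ℕ) = l - 1 - ((σ⁻¹ k : Fin l) : ℕ) := by
    rw [Fin.val_rev]; omega
  rw [h3]
  push_cast [Nat.sub_sub]
  omega
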